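/- Let (L, A, ω, {{-,-}}) be a double Lie algebroid with zero anchor. Then on the quotient L/[A,L], the products induced by •_l and •_r (where X •_l Y = m({{X,Y}}_l) and X •_r Y = -m({{X,Y}}_r)) are opposite to each other: X •_r Y ≡ Y •_l X mod [A,L]. Consequently the bracket {X,Y} = m({{X,Y}}) = X •_l Y - X •_r Y induces on L/[A,L] the commutator Lie bracket of the associative product induced by •_l. -/
import Mathlib


open TensorProduct MulOpposite

variable (k : Type*) [Field k] [CharZero k]
  (A : Type*) [Ring A] [Algebra k A]
  (L : Type*) [AddCommGroup L] [Module k L]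
  [Module A L] [Module Aᵐᵒᵖ L] [SMulCommClass A Aᵐᵒᵖ L]
  [IsScalarTower k A L] [IsScalarTower k Aᵐᵒᵖ L]
  [SMulCommClass k A L] [SMulCommClass k Aᵐᵒᵖ L]

/-- left action of `a ∈ A` on `L`, as a `k`-linear map. -/
noncomputable def lact (a : A) : L →ₗ[k] L where
  toFun x := a • x
  map_add' := smul_add a
  map_smul' c x := (smul_comm c a x).symm

/-- right action of `a ∈ A` on `L`, as a `k`-linear map. -/
noncomputable def ract (a : A) : L →ₗ[k] L where
  toFun x := op a • x
  map_add' := smul_add (op a)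
  map_smul' c x := (smul_comm c (op a) x).symm

/-- `L ⊗ A → L`, `ξ ⊗ a ↦ ξ·a`. -/
noncomputable def ml : L ⊗[k] A →ₗ[k] L :=
  TensorProduct.lift (LinearMap.mk₂ k (fun x a => op a • x)
    (by intros; simp [smul_add]) (by intros; exact (smul_comm _ _ _).symm)
    (by intros; simp [op_add, add_smul]) (by intros; simp [op_smul, smul_assoc]))

/-- `A ⊗ L → L`, `a ⊗ ξ ↦ a·ξ`. -/
noncomputable def mr : A ⊗[k] L →ₗ[k] L :=
  TensorProduct.lift (LinearMap.mk₂ k (fun a x => a • x)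
    (by intros; simp [add_smul]) (by intros; simp [smul_assoc])
    (by intros; simp [smul_add]) (by intros; exact (smul_comm _ _ _).symm))

/-- `{{D₁, -}}_L` applied to the `L`-slot of the `L ⊗ A` component. -/
noncomputable def LAm (bl : L →ₗ[k] L →ₗ[k] L ⊗[k] A) (D : L) :
    L ⊗[k] A →ₗ[k] L ⊗[k] (A ⊗[k] A) :=
  (TensorProduct.assoc k L A A).toLinearMap ∘ₗ LinearMap.rTensor A (bl D)

/-- `{{D₁, -}}_R` applied to the `L`-slot of the `L ⊗ A` component. -/
noncomputable def Bm (br : L →ₗ[k] L →ₗ[k] A ⊗[k] L) (D : L) :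
    L ⊗[k] A →ₗ[k] A ⊗[k] (L ⊗[k] A) :=
  (TensorProduct.assoc k A L A).toLinearMap ∘ₗ LinearMap.rTensor A (br D)

/-- `τ² : A ⊗ L ⊗ A → L ⊗ A ⊗ A`, `a ⊗ ξ ⊗ b ↦ ξ ⊗ b ⊗ a`. -/
noncomputable def ρ31 : A ⊗[k] (L ⊗[k] A) →ₗ[k] L ⊗[k] (A ⊗[k] A) :=
  (TensorProduct.assoc k L A A).toLinearMap ∘ₗ
    (TensorProduct.comm k A (L ⊗[k] A)).toLinearMap

/-- `τ : L ⊗ A ⊗ A → A ⊗ L ⊗ A`, `ξ ⊗ a ⊗ b ↦ b ⊗ ξ ⊗ a`. -/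
noncomputable def ρ12 : L ⊗[k] (A ⊗[k] A) →ₗ[k] A ⊗[k] (L ⊗[k] A) :=
  (TensorProduct.comm k (L ⊗[k] A) A).toLinearMap ∘ₗ
    (TensorProduct.assoc k L A A).symm.toLinearMap

/-- `τ : A ⊗ L ⊗ A → A ⊗ A ⊗ L`, `a ⊗ ξ ⊗ b ↦ b ⊗ a ⊗ ξ`. -/
noncomputable def ρ23 : A ⊗[k] (L ⊗[k] A) →ₗ[k] A ⊗[k] (A ⊗[k] L) :=
  (TensorProduct.comm k (A ⊗[k] L) A).toLinearMap ∘ₗ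
    (TensorProduct.assoc k A L A).symm.toLinearMap

/-- `τ² : L ⊗ A ⊗ A → A ⊗ A ⊗ L`, `ξ ⊗ a ⊗ b ↦ a ⊗ b ⊗ ξ`. -/
noncomputable def ρ13 : L ⊗[k] (A ⊗[k] A) →ₗ[k] A ⊗[k] (A ⊗[k] L) :=
  (TensorProduct.assoc k A A L).toLinearMap ∘ₗ
    (TensorProduct.comm k L (A ⊗[k] A)).toLinearMap


/-- for a double Lie algebroid with zero anchor, the products
`X •ₗ Y = m({{X,Y}}_l)` and `X •ᵣ Y = -m({{X,Y}}_r)` induce opposite products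
on `L/[A,L]`, and `{X,Y} = m({{X,Y}})` induces the commutator bracket of the
product induced by `•ₗ`. -/
theorem double_lie_algebroid_zero_anchor_opposite_products_mod_commutators
    (bl : L →ₗ[k] L →ₗ[k] L ⊗[k] A) (br : L →ₗ[k] L →ₗ[k] A ⊗[k] L)
    (hanti : ∀ D Δ : L, bl D Δ = - (TensorProduct.comm k A L) (br Δ D))
    (hl1 : ∀ (D Δ : L) (a : A), bl D (a • Δ) =
      LinearMap.rTensor A (lact k A L a) (bl D Δ))
    (hl2 : ∀ (D Δ : L) (a : A), bl D (op a • Δ) =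
      LinearMap.lTensor L (LinearMap.mulRight k a) (bl D Δ))
    (hr1 : ∀ (D Δ : L) (a : A), br D (a • Δ) =
      LinearMap.rTensor L (LinearMap.mulLeft k a) (br D Δ))
    (hr2 : ∀ (D Δ : L) (a : A), br D (op a • Δ) =
      LinearMap.lTensor A (ract k A L a) (br D Δ))
    (hJ1 : ∀ D₁ D₂ D₃ : L,
      LAm k A L bl D₁ (bl D₂ D₃) + ρ31 k A L (Bm k A L br D₃ (bl D₁ D₂)) = 0)
    (hJ2 : ∀ D₁ D₂ D₃ : L,
      Bm k A L br D₁ (bl D₂ D₃) + ρ12 k A L (LAm k A L bl D₂ (bl D₃ D₁)) = 0)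
    (hJ3 : ∀ D₁ D₂ D₃ : L,
      ρ23 k A L (Bm k A L br D₂ (bl D₃ D₁))
        + ρ13 k A L (LAm k A L bl D₃ (bl D₁ D₂)) = 0) :
    -- `X •ᵣ Y ≡ Y •ₗ X mod [A,L]`
    (∀ X Y : L,
      (- mr k A L (br X Y)) - ml k A L (bl Y X) ∈
        Submodule.span k {x : L | ∃ (a : A) (ξ : L), x = a • ξ - op a • ξ}) ∧
    -- `{X,Y} ≡ X •ₗ Y - Y •ₗ X mod [A,L]`
    (∀ X Y : L,
      (ml k A L (bl X Y) + mr k A L (br X Y))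
        - (ml k A L (bl X Y) - ml k A L (bl Y X)) ∈
        Submodule.span k {x : L | ∃ (a : A) (ξ : L), x = a • ξ - op a • ξ}) := by
  have key : ∀ t : A ⊗[k] L, ml k A L ((TensorProduct.comm k A L) t) - mr k A L t ∈
      Submodule.span k {x : L | ∃ (a : A) (ξ : L), x = a • ξ - op a • ξ} := by
    intro t
    induction t using TensorProduct.induction_on with
    | zero => simp
    | tmul a ξ =>
      have h1 : ml k A L ((TensorProduct.comm k A L) (a ⊗ₜ[k] ξ)) = op a • ξ := by
        simp [ml]
      have h2 : mr k A L (a ⊗ₜ[k] ξ) = a • ξ := by simp [mr]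
      rw [h1, h2, show op a • ξ - a • ξ = -(a • ξ - op a • ξ) by abel]
      exact Submodule.neg_mem _ (Submodule.subset_span ⟨a, ξ, rfl⟩)
    | add x y hx hy =>
      have : ml k A L ((TensorProduct.comm k A L) (x + y)) - mr k A L (x + y) =
          (ml k A L ((TensorProduct.comm k A L) x) - mr k A L x) +
          (ml k A L ((TensorProduct.comm k A L) y) - mr k A L y) := by
        simp [map_add]; abel
      rw [this]
      exact Submodule.add_mem _ hx hy
  have main : ∀ X Y : L,
      (- mr k A L (br X Y)) - ml k A L (bl Y X) ∈
        Submodule.span k {x : L | ∃ (a : A) (ξ : L), x = a • ξ - op a • ξ} := by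
    intro X Y
    have hb : ml k A L (bl Y X) = - ml k A L ((TensorProduct.comm k A L) (br X Y)) := by
      rw [hanti Y X, map_neg]
    rw [hb, show (- mr k A L (br X Y)) - (- ml k A L ((TensorProduct.comm k A L) (br X Y)))
        = ml k A L ((TensorProduct.comm k A L) (br X Y)) - mr k A L (br X Y) by abel]
    exact key (br X Y)
  refine ⟨main, fun X Y => ?_⟩
  have := Submodule.neg_mem _ (main X Y)
  rw [show -((- mr k A L (br X Y)) - ml k A L (bl Y X)) =
      (ml k A L (bl X Y) + mr k A L (br X Y))
        - (ml k A L (bl X Y) - ml k A L (bl Y X)) by abel] at this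
  exact this
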